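/- In ℝ² with the ℓ¹ norm ‖(x,y)‖₁ = |x| + |y|, the two point sites p⁻ = (0,0) and p⁺ = (0,3) admit at least two distinct zone diagrams. -/

import Mathlib

open EMetric Set

/-- The plane with the ℓ¹ norm. -/
abbrev L1Plane := PiLp 1 (fun _ : Fin 2 => ℝ)

/-- The dominance region of `A` over `B` in the ℓ¹ plane. -/
def dom (A B : Set L1Plane) : Set L1Plane :=
  {x | infEdist x A ≤ infEdist x B}

noncomputable def pt (a b : ℝ) : L1Plane := (WithLp.equiv 1 (Fin 2 → ℝ)).symm ![a, b]

@[simp] lemma pt_apply0 (a b : ℝ) : pt a b 0 = a := rfl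
@[simp] lemma pt_apply1 (a b : ℝ) : pt a b 1 = b := rfl

lemma l1dist (x y : L1Plane) : dist x y = |x 0 - y 0| + |x 1 - y 1| := by
  rw [PiLp.dist_eq_sum (by norm_num : 0 < (1 : ENNReal).toReal)]
  simp [Fin.sum_univ_two, Real.dist_eq]

lemma mem_dom_singleton {q : L1Plane} {S : Set L1Plane} {x : L1Plane} :
    x ∈ dom {q} S ↔ ∀ y ∈ S, dist x q ≤ dist x y := by
  simp only [dom, mem_setOf_eq, EMetric.infEdist, Metric.infEDist_singleton, Metric.le_infEDist]
  constructor <;> intro h y hy <;> have h2 := h y hy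
  · rw [edist_dist, edist_dist] at h2
    exact (ENNReal.ofReal_le_ofReal_iff dist_nonneg).mp h2
  · rw [edist_dist, edist_dist]
    exact ENNReal.ofReal_le_ofReal h2

def A : Set L1Plane := {x | x 1 ≤ 0 ∨ 3 * x 1 + |x 0| ≤ 3}
def B : Set L1Plane := {x | |x 0| ≤ 3 ∧ 6 + |x 0| ≤ 3 * x 1}

lemma hA : A = dom {pt 0 0} B := by
  ext x
  rw [mem_dom_singleton]
  constructor
  · rintro hx y ⟨hy0, hy1⟩
    rw [l1dist, l1dist]
    simp only [pt_apply0, pt_apply1, sub_zero]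
    have h1 := abs_sub_abs_le_abs_sub (x 0) (y 0)
    have h2 := abs_sub_abs_le_abs_sub (y 0) (x 0)
    have h2' : |y 0 - x 0| = |x 0 - y 0| := abs_sub_comm _ _
    have hc := abs_nonneg (y 0)
    have ha := abs_nonneg (x 0)
    have hb1 : x 1 ≤ 1 := by rcases hx with h | h <;> linarith
    have hbd : |x 1 - y 1| = y 1 - x 1 := by rw [abs_of_nonpos (by linarith : x 1 - y 1 ≤ 0)]; ring
    rw [hbd]
    rcases hx with h | h
    · rw [abs_of_nonpos h]; linarith
    · rcases le_total (x 1) 0 with hb | hb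
      · rw [abs_of_nonpos hb]; linarith
      · rw [abs_of_nonneg hb]
        rcases le_total |x 0| |y 0| with hac | hac <;> linarith
  · intro H
    by_contra hx
    simp only [A, mem_setOf_eq, not_or, not_le] at hx
    obtain ⟨hb, hba⟩ := hx
    rcases le_total |x 0| 3 with ha | ha
    · have hmem : pt (x 0) (2 + |x 0| / 3) ∈ B := by
        constructor <;> simp only [pt_apply0, pt_apply1] <;> linarith
      have := H _ hmem
      rw [l1dist, l1dist] at this
      simp only [pt_apply0, pt_apply1, sub_zero, sub_self, abs_zero, zero_add] at this
      rw [abs_of_pos hb] at this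
      rcases abs_cases (x 1 - (2 + |x 0| / 3)) with ⟨he, _⟩ | ⟨he, _⟩ <;>
        rw [he] at this <;> linarith [abs_nonneg (x 0)]
    · rcases le_total 0 (x 0) with hs | hs
      · have hmem : pt 3 3 ∈ B := by constructor <;> simp <;> norm_num
        have := H _ hmem
        rw [l1dist, l1dist] at this
        simp only [pt_apply0, pt_apply1, sub_zero] at this
        rw [abs_of_nonneg hs, abs_of_pos hb, abs_of_nonneg (by rw [abs_of_nonneg hs] at ha; linarith : (0:ℝ) ≤ x 0 - 3)] at this
        rcases abs_cases (x 1 - 3) with ⟨he, _⟩ | ⟨he, _⟩ <;> rw [he] at this <;> linarith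
      · have hmem : pt (-3) 3 ∈ B := by constructor <;> simp <;> norm_num
        have := H _ hmem
        rw [l1dist, l1dist] at this
        simp only [pt_apply0, pt_apply1, sub_zero] at this
        rw [abs_of_nonpos hs, abs_of_pos hb, abs_of_nonpos (by rw [abs_of_nonpos hs] at ha; linarith : x 0 - -3 ≤ 0)] at this
        rcases abs_cases (x 1 - 3) with ⟨he, _⟩ | ⟨he, _⟩ <;> rw [he] at this <;> linarith

lemma hB : B = dom {pt 0 3} A := by
  ext x
  rw [mem_dom_singleton]
  constructor
  · rintro ⟨ha, hab⟩ y hy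
    rw [l1dist, l1dist]
    simp only [pt_apply0, pt_apply1, sub_zero]
    have h1 := abs_sub_abs_le_abs_sub (x 0) (y 0)
    have hc := abs_nonneg (y 0)
    have hax := abs_nonneg (x 0)
    have hd1 : y 1 ≤ 1 := by rcases hy with h | h <;> linarith
    have hbd : |x 1 - y 1| = x 1 - y 1 := abs_of_nonneg (by linarith)
    rw [hbd]
    rcases hy with h | h <;> rcases le_total |y 0| 3 with hc3 | hc3 <;>
      rcases abs_cases (x 1 - 3) with ⟨he, hs⟩ | ⟨he, hs⟩ <;> rw [he] <;>
      linarith [abs_nonneg (x 0 - y 0)]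
  · intro H
    by_contra hx
    simp only [B, mem_setOf_eq, not_and, not_le] at hx
    rcases le_or_gt |x 0| 3 with ha | ha
    · have hb := hx ha
      have hmem : pt (x 0) ((3 - |x 0|) / 3) ∈ A := by
        right
        simp only [pt_apply0, pt_apply1]
        ring_nf
        linarith [abs_nonneg (x 0)]
      have := H _ hmem
      rw [l1dist, l1dist] at this
      simp only [pt_apply0, pt_apply1, sub_zero, sub_self, abs_zero, zero_add] at this
      rcases abs_cases (x 1 - (3 - |x 0|) / 3) with ⟨he, hs⟩ | ⟨he, hs⟩ <;>
        rcases abs_cases (x 1 - 3) with ⟨he2, hs2⟩ | ⟨he2, hs2⟩ <;>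
        rw [he, he2] at this <;> linarith [abs_nonneg (x 0)]
    · have hmem : pt (x 0) 0 ∈ A := by left; simp
      have := H _ hmem
      rw [l1dist, l1dist] at this
      simp only [pt_apply0, pt_apply1, sub_zero, sub_self, abs_zero, zero_add] at this
      have h3 : |x 1| - |x 1 - 3| ≤ 3 := by
        have h4 := abs_sub_abs_le_abs_sub (x 1) (x 1 - 3)
        have h5 : x 1 - (x 1 - 3) = 3 := by ring
        rw [h5] at h4
        simpa using h4
      linarith

noncomputable def σ (x : L1Plane) : L1Plane := pt (x 0) (3 - x 1)

lemma σ_inv : Function.Involutive σ := by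
  intro x
  ext i
  fin_cases i <;> simp [σ] <;> ring

lemma σ_isometry : Isometry σ := by
  apply Isometry.of_dist_eq
  intro x y
  rw [l1dist, l1dist]
  simp only [σ, pt_apply0, pt_apply1]
  have : (3 - x 1) - (3 - y 1) = -(x 1 - y 1) := by ring
  rw [this, abs_neg]

lemma σ_image_image (s : Set L1Plane) : σ '' (σ '' s) = s := by
  rw [Set.image_image]
  simp only [σ_inv _]
  exact Set.image_id s

lemma dom_image (X Y : Set L1Plane) : dom (σ '' X) (σ '' Y) = σ '' dom X Y := by
  have key : ∀ (z : L1Plane) (s : Set L1Plane), infEdist (σ z) (σ '' s) = infEdist z s :=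
    fun z s => infEdist_image σ_isometry
  ext x
  constructor
  · intro hx
    refine ⟨σ x, ?_, σ_inv x⟩
    simp only [dom, mem_setOf_eq] at hx ⊢
    have e1 := key x (σ '' X); rw [σ_image_image X] at e1
    have e2 := key x (σ '' Y); rw [σ_image_image Y] at e2
    rw [e1, e2]; exact hx
  · rintro ⟨z, hz, rfl⟩
    simp only [dom, mem_setOf_eq] at hz ⊢
    rwa [key z X, key z Y]

lemma σ_p : σ (pt 0 0) = pt 0 3 := by ext i; fin_cases i <;> simp [σ]
lemma σ_q : σ (pt 0 3) = pt 0 0 := by ext i; fin_cases i <;> simp [σ]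


/-- In the ℓ¹ plane, the two point sites `(0,0)` and `(0,3)` admit at least two
distinct zone diagrams. -/
theorem l1_zone_diagram_not_unique :
    ∃ R₁ R₂ S₁ S₂ : Set L1Plane,
      R₁ = dom {(WithLp.equiv 1 (Fin 2 → ℝ)).symm ![0, 0]} R₂ ∧
      R₂ = dom {(WithLp.equiv 1 (Fin 2 → ℝ)).symm ![0, 3]} R₁ ∧
      S₁ = dom {(WithLp.equiv 1 (Fin 2 → ℝ)).symm ![0, 0]} S₂ ∧
      S₂ = dom {(WithLp.equiv 1 (Fin 2 → ℝ)).symm ![0, 3]} S₁ ∧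
      (R₁ ≠ S₁ ∨ R₂ ≠ S₂) := by
  refine ⟨A, B, σ '' B, σ '' A, hA, hB, ?_, ?_, Or.inl ?_⟩
  · have h : σ '' B = dom (σ '' {pt 0 3}) (σ '' A) := by rw [dom_image, ← hB]
    rw [Set.image_singleton, σ_q] at h
    exact h
  · have h : σ '' A = dom (σ '' {pt 0 0}) (σ '' B) := by rw [dom_image, ← hA]
    rw [Set.image_singleton, σ_p] at h
    exact h
  · intro h
    have h1 : pt 4 0 ∈ A := Or.inl (by simp)
    rw [h] at h1
    obtain ⟨z, hz, hzx⟩ := h1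
    have hz0 : z 0 = (4 : ℝ) := congrArg (fun v : L1Plane => v 0) hzx
    have := hz.1
    rw [hz0] at this
    norm_num at this
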